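/- Assume: (S1) κ is a regular uncountable cardinal; (S2) 𝒯 = (T,⪯) is a well-founded partially ordered set with |T| ≤ κ; (S3) X ⊆ κ carries a topology τ with |X| = κ that refines the topology induced on X by the order topology of κ; (S4) {X_t : t ∈ T} is a partition of X into pieces each of cardinality κ; and (S7) for all s ≺ t in T and every S ⊆ X_t with |S| = κ, the τ-closure of S meets X_s in a set that is stationary in κ. Then every left-separating well-ordering of X has order type at least κ·(rk(𝒯)∸1); in particular, if X is left-separated then ord_ℓ(X) ≥ κ·(rk(𝒯)∸1). -/

import Mathlib

universe u v

open Cardinal Ordinal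

/-- `o` is the order type of some left-separating well-ordering of `X`:
a well-ordering all of whose initial segments are closed. -/
def IsLeftSepType (X : Type u) [TopologicalSpace X] (o : Ordinal.{u}) : Prop :=
  ∃ (r : X → X → Prop) (hwo : IsWellOrder X r),
    (∀ x : X, IsClosed {y | r y x}) ∧ o = @Ordinal.type X r hwo

/-- A space is left-separated if it admits a left-separating well-ordering. -/
def IsLeftSeparated (X : Type u) [TopologicalSpace X] : Prop :=
  ∃ o, IsLeftSepType X o

/-- The left-separating type of a space: the minimum of the order types of its
left-separating well-orderings. -/
noncomputable def ordL (X : Type u) [TopologicalSpace X] : Ordinal.{u} :=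
  sInf {o | IsLeftSepType X o}

/-- The rank of a well-founded partial order: `rk(𝒯) = sup { rk_𝒯(t) + 1 : t ∈ T }`,
where `rk_𝒯` is the usual well-founded rank function. -/
noncomputable def pordRank (T : Type u) [PartialOrder T] [WellFoundedLT T] : Ordinal.{u} :=
  ⨆ t : T, IsWellFounded.rank (α := T) (· < ·) t + 1

/-- `C` is a closed unbounded (club) subset of the ordinal `o`. -/
def IsClubIn (C : Set Ordinal.{v}) (o : Ordinal.{v}) : Prop :=
  C ⊆ Set.Iio o ∧
  (∀ β < o, ∃ γ ∈ C, β ≤ γ) ∧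
  (∀ β < o, Order.IsSuccLimit β → (∀ γ < β, ∃ δ ∈ C, γ ≤ δ ∧ δ < β) → β ∈ C)

/-- `S` is a stationary subset of the ordinal `o`: it meets every club subset of `o`. -/
def IsStationaryIn (S : Set Ordinal.{v}) (o : Ordinal.{v}) : Prop :=
  S ⊆ Set.Iio o ∧ ∀ C : Set Ordinal.{v}, IsClubIn C o → (S ∩ C).Nonempty

section ClubLemmas

variable {κ : Cardinal.{0}}

lemma tail_club {β : Ordinal.{0}} (hβ : β < κ.ord) :
    IsClubIn ({γ | β ≤ γ} ∩ Set.Iio κ.ord) κ.ord := by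
  refine ⟨Set.inter_subset_right, ?_, ?_⟩
  · intro γ hγ
    exact ⟨max β γ, ⟨show β ≤ max β γ from le_max_left _ _, max_lt hβ hγ⟩, le_max_right _ _⟩
  · rintro β' hβ' hlim hcof
    obtain ⟨δ, ⟨hδ1, _⟩, _, hδβ'⟩ := hcof 0 hlim.pos
    exact ⟨hδ1.trans hδβ'.le, hβ'⟩

lemma isLimit_nat_sup {a : ℕ → Ordinal.{0}} (h : ∀ n, a n < a (n + 1)) :
    Order.IsSuccLimit (⨆ n, a n) := by
  have hle : ∀ n, a n ≤ ⨆ n, a n := Ordinal.le_iSup a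
  rw [Ordinal.isSuccLimit_iff, Order.isSuccPrelimit_iff_succ_lt]
  constructor
  · intro h0
    have := (h 0).trans_le (hle 1)
    rw [h0] at this
    exact absurd this (by simp)
  · intro c hc
    obtain ⟨n, hn⟩ := (Ordinal.lt_iSup_iff).1 hc
    exact lt_of_le_of_lt (Order.succ_le_of_lt ((hn.trans (h n)).trans_le (le_refl _)))
      ((h (n+1)).trans_le (hle (n+2))) |>.trans_le (le_refl _)

end ClubLemmas

section Diag

variable {κ : Cardinal.{0}}

lemma diagonal_club (hreg : κ.IsRegular) (hunc : Cardinal.aleph0 < κ)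
    (C : Ordinal.{0} → Set Ordinal.{0}) (h : ∀ ν < κ.ord, IsClubIn (C ν) κ.ord) :
    IsClubIn {α | α < κ.ord ∧ ∀ ν < α, α ∈ C ν} κ.ord := by
  classical
  have hlim : Order.IsSuccLimit κ.ord := Cardinal.isSuccLimit_ord hreg.aleph0_le
  have pick : ∀ α, α < κ.ord → ∀ ν, ν < α → ∃ δ, δ ∈ C ν ∧ α ≤ δ ∧ δ < κ.ord := by
    intro α hα ν hν
    obtain ⟨δ, hδC, hδge⟩ := (h ν (hν.trans hα)).2.1 α hα
    exact ⟨δ, hδC, hδge, (h ν (hν.trans hα)).1 hδC⟩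
  set g : Ordinal.{0} → Ordinal.{0} := fun α =>
    if hα : α < κ.ord then
      max (α + 1) (Ordinal.bsup.{0,0} α (fun ν hν => Classical.choose (pick α hα ν hν) + 1))
    else 0 with hgdef
  have hg1 : ∀ α, α < κ.ord → α < g α := by
    intro α hα
    have : α < α + 1 := by rw [Ordinal.add_one_eq_succ]; exact Order.lt_succ α
    simp only [hgdef, dif_pos hα]
    exact this.trans_le (le_max_left _ _)
  have hg2 : ∀ α, α < κ.ord → g α < κ.ord := by
    intro α hα
    simp only [hgdef, dif_pos hα]
    apply max_lt
    · rw [Ordinal.add_one_eq_succ]; exact hlim.succ_lt hα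
    · apply Ordinal.bsup_lt_ord
      · rw [hreg.cof_eq]; exact Cardinal.lt_ord.1 hα
      · intro ν hν
        have hspec := Classical.choose_spec (pick α hα ν hν)
        rw [Ordinal.add_one_eq_succ]
        exact hlim.succ_lt hspec.2.2
  have hg3 : ∀ α, ∀ hα : α < κ.ord, ∀ ν, ∀ hν : ν < α,
      ∃ δ, δ ∈ C ν ∧ α ≤ δ ∧ δ < g α := by
    intro α hα ν hν
    have hspec := Classical.choose_spec (pick α hα ν hν)
    refine ⟨Classical.choose (pick α hα ν hν), hspec.1, hspec.2.1, ?_⟩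
    have h1 : Classical.choose (pick α hα ν hν) + 1 ≤
        Ordinal.bsup.{0,0} α (fun ν hν => Classical.choose (pick α hα ν hν) + 1) :=
      Ordinal.le_bsup _ ν hν
    have h2 : Classical.choose (pick α hα ν hν) < Classical.choose (pick α hα ν hν) + 1 := by
      rw [Ordinal.add_one_eq_succ]; exact Order.lt_succ _
    simp only [hgdef, dif_pos hα]
    exact lt_of_lt_of_le (h2.trans_le h1) (le_max_right _ _)
  refine ⟨fun x hx => hx.1, ?_, ?_⟩
  · -- unboundedness
    intro β hβ
    set a : ℕ → Ordinal.{0} := fun n => g^[n] (β + 1) with hadef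
    have ha0 : a 0 = β + 1 := rfl
    have hasucc : ∀ n, a (n + 1) = g (a n) := by
      intro n; simp only [hadef, Function.iterate_succ_apply']
    have hbd : ∀ n, a n < κ.ord := by
      intro n; induction n with
      | zero => rw [ha0, Ordinal.add_one_eq_succ]; exact hlim.succ_lt hβ
      | succ n ih => rw [hasucc]; exact hg2 _ ih
    have hmono : ∀ n, a n < a (n + 1) := by
      intro n; rw [hasucc]; exact hg1 _ (hbd n)
    have hmonole : Monotone a := (strictMono_nat_of_lt_succ hmono).monotone
    set δ := ⨆ n, a n with hδdef
    have hδκ : δ < κ.ord := by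
      apply Ordinal.iSup_lt_ord _ hbd
      rw [hreg.cof_eq, Cardinal.mk_nat]; exact hunc
    have hδlim : Order.IsSuccLimit δ := isLimit_nat_sup hmono
    have hle : ∀ n, a n ≤ δ := Ordinal.le_iSup a
    refine ⟨δ, ⟨hδκ, ?_⟩, (Order.lt_succ β).le.trans (by rw [← Ordinal.add_one_eq_succ, ← ha0]; exact hle 0)⟩
    intro ν hν
    apply (h ν (hν.trans hδκ)).2.2 δ hδκ hδlim
    intro γ hγ
    obtain ⟨n₁, hν₁⟩ := (Ordinal.lt_iSup_iff).1 hν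
    obtain ⟨n₂, hγ₂⟩ := (Ordinal.lt_iSup_iff).1 hγ
    set n := max n₁ n₂
    have hνa : ν < a n := hν₁.trans_le (hmonole (le_max_left _ _))
    have hγa : γ < a n := hγ₂.trans_le (hmonole (le_max_right _ _))
    obtain ⟨δ', hδ'C, hδ'ge, hδ'lt⟩ := hg3 (a n) (hbd n) ν hνa
    refine ⟨δ', hδ'C, (hγa.le.trans hδ'ge), ?_⟩
    calc δ' < g (a n) := hδ'lt
    _ = a (n + 1) := (hasucc n).symm
    _ ≤ δ := hle (n + 1)
  · -- closedness
    rintro β hβ hblim hcof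
    refine ⟨hβ, fun ν hν => ?_⟩
    apply (h ν (hν.trans hβ)).2.2 β hβ hblim
    intro γ hγ
    have hsucc : ν + 1 < β := by rw [Ordinal.add_one_eq_succ]; exact hblim.succ_lt hν
    obtain ⟨δ', ⟨hδ'κ, hδ'mem⟩, hδ'ge, hδ'lt⟩ := hcof (max γ (ν + 1)) (max_lt hγ hsucc)
    have hνδ' : ν < δ' := lt_of_lt_of_le (by rw [Ordinal.add_one_eq_succ]; exact Order.lt_succ ν)
      ((le_max_right _ _).trans hδ'ge)
    exact ⟨δ', hδ'mem ν hνδ', (le_max_left _ _).trans hδ'ge, hδ'lt⟩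

end Diag

section Fodor

variable {κ : Cardinal.{0}}

lemma fodor_lemma (hreg : κ.IsRegular) (hunc : Cardinal.aleph0 < κ)
    {S : Set Ordinal.{0}} (hS : IsStationaryIn S κ.ord)
    (f : Ordinal.{0} → Ordinal.{0}) (hf : ∀ α ∈ S, f α < α) :
    ∃ ν, IsStationaryIn {α | α ∈ S ∧ f α = ν} κ.ord := by
  classical
  by_contra hno
  push_neg at hno
  have hfib : ∀ ν : Ordinal.{0}, ∃ Cν : Set Ordinal.{0},
      IsClubIn Cν κ.ord ∧ {α | α ∈ S ∧ f α = ν} ∩ Cν = ∅ := by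
    intro ν
    have h1 : ¬ IsStationaryIn {α | α ∈ S ∧ f α = ν} κ.ord := hno ν
    rw [IsStationaryIn] at h1
    push_neg at h1
    have hsub : {α | α ∈ S ∧ f α = ν} ⊆ Set.Iio κ.ord := fun α hα => hS.1 hα.1
    obtain ⟨Cν, hCν, hempty⟩ := h1 hsub
    exact ⟨Cν, hCν, hempty⟩
  choose Cν hclub hdis using hfib
  have hD := diagonal_club hreg hunc Cν (fun ν _ => hclub ν)
  obtain ⟨α, hαS, hαD⟩ := hS.2 _ hD
  have hfα : f α < α := hf α hαS
  have hmem : α ∈ Cν (f α) := hαD.2 _ hfα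
  have : α ∈ {β | β ∈ S ∧ f β = f α} ∩ Cν (f α) := ⟨⟨hαS, rfl⟩, hmem⟩
  rw [hdis (f α)] at this
  exact this

lemma stationary_card (hreg : κ.IsRegular) {S : Set Ordinal.{0}}
    (hS : IsStationaryIn S κ.ord) : Cardinal.lift.{1} κ ≤ #↥S := by
  classical
  -- S is unbounded in κ.ord
  have hunb : ∀ β < κ.ord, ∃ γ ∈ S, β ≤ γ := by
    intro β hβ
    obtain ⟨γ, hγS, hγ1, _⟩ := hS.2 _ (tail_club hβ)
    exact ⟨γ, hγS, hγ1⟩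
  -- transfer to κ.ord.toType
  set e := Ordinal.ToType.mk (o := κ.ord) with he
  set S' : Set (κ.ord.ToType) := {x | (↑(e.symm x) : Ordinal.{0}) ∈ S} with hS'
  have hSunb : Set.Unbounded (· < ·) S' := by
    intro x
    obtain ⟨γ, hγS, hγge⟩ := hunb ↑(e.symm x) (e.symm x).2
    refine ⟨e ⟨γ, hS.1 hγS⟩, ?_, ?_⟩
    · show (↑(e.symm (e ⟨γ, hS.1 hγS⟩)) : Ordinal) ∈ S
      rw [OrderIso.symm_apply_apply]
      exact hγS
    · intro hlt
      have := e.symm.strictMono hlt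
      rw [OrderIso.symm_apply_apply] at this
      exact absurd (this.trans_le hγge) (lt_irrefl _)
  have hcof := Order.cof_le (s := S') (fun x => by obtain ⟨b, hb, hb'⟩ := hSunb x; exact ⟨b, hb, not_lt.1 hb'⟩)
  rw [Ordinal.cof_toType, hreg.cof_eq] at hcof
  -- now compare cardinalities via the equivalence S ≃ S'
  have hmemF : ∀ x : ↥S, e ⟨(x : Ordinal), hS.1 x.2⟩ ∈ S' := by
    intro x
    show (↑(e.symm (e ⟨(x : Ordinal), hS.1 x.2⟩)) : Ordinal) ∈ S
    rw [OrderIso.symm_apply_apply]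
    exact x.2
  have hequiv : Nonempty (↥S ≃ ↥S') := by
    refine ⟨Equiv.ofBijective (fun x => ⟨e ⟨(x : Ordinal), hS.1 x.2⟩, hmemF x⟩) ⟨?_, ?_⟩⟩
    · intro x y hxy
      simp only [Subtype.mk.injEq, EmbeddingLike.apply_eq_iff_eq] at hxy
      exact Subtype.ext hxy
    · intro y
      refine ⟨⟨↑(e.symm ↑y), y.2⟩, ?_⟩
      simp only [Subtype.coe_eta, OrderIso.apply_symm_apply]
  have hlift : Cardinal.lift.{0} #↥S = Cardinal.lift.{1} #↥S' :=
    Cardinal.lift_mk_eq'.2 hequiv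
  rw [Cardinal.lift_id'] at hlift
  rw [hlift]
  exact Cardinal.lift_le.2 hcof

end Fodor
theorem stmt_8 (κ : Cardinal.{0}) (hreg : κ.IsRegular) (hunc : Cardinal.aleph0 < κ)
    (X : Set Ordinal.{0}) (hXsub : X ⊆ Set.Iio κ.ord)
    (hXcard : #↥X = Cardinal.lift.{1} κ)
    (τ : TopologicalSpace ↥X)
    (hτ : τ ≤ TopologicalSpace.induced (Subtype.val : ↥X → Ordinal.{0})
      (Preorder.topology Ordinal.{0}))
    (T : Type) [PartialOrder T] [WellFoundedLT T] (hT : #T ≤ κ)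
    (P : T → Set ↥X)
    (hdisj : ∀ s t : T, s ≠ t → Disjoint (P s) (P t))
    (hcov : (⋃ t, P t) = Set.univ)
    (hsize : ∀ t, #↥(P t) = Cardinal.lift.{1} κ)
    (hS7 : ∀ s t : T, s < t → ∀ S ⊆ P t, #↥S = Cardinal.lift.{1} κ →
      IsStationaryIn (Subtype.val '' (@closure _ τ S ∩ P s)) κ.ord) :
    (∀ (r : ↥X → ↥X → Prop) (hwo : IsWellOrder ↥X r),
        (∀ x : ↥X, @IsClosed _ τ {y | r y x}) →
        Ordinal.lift.{1} (κ.ord * (pordRank T).pred) ≤ @Ordinal.type ↥X r hwo) ∧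
    (@IsLeftSeparated ↥X τ →
        Ordinal.lift.{1} (κ.ord * (pordRank T).pred) ≤ @ordL ↥X τ) := by
  classical
  have hκord0 : κ.ord ≠ 0 := (Cardinal.isSuccLimit_ord hreg.aleph0_le).pos.ne'
  have part1 : ∀ (r : ↥X → ↥X → Prop) (hwo : IsWellOrder ↥X r),
      (∀ x : ↥X, @IsClosed _ τ {y | r y x}) →
      Ordinal.lift.{1} (κ.ord * (pordRank T).pred) ≤ @Ordinal.type ↥X r hwo := by
    intro r hwo hcl
    letI : IsWellOrder ↥X r := hwo
    letI : TopologicalSpace ↥X := τ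
    set rk : T → Ordinal.{0} := fun t => IsWellFounded.rank (α := T) (· < ·) t with hrkdef
    have hval_inj : Function.Injective (Subtype.val : ↥X → Ordinal.{0}) :=
      Subtype.val_injective
    -- Witness lemma: a point of the closure of A outside A has a "witness" in A
    -- which is below it in ordinal value and not r-below it.
    have hwitness : ∀ (A : Set ↥X) (y : ↥X), y ∈ @closure _ τ A → y ∉ A →
        ∃ x, x ∈ A ∧ ¬ r x y ∧ (x : Ordinal.{0}) < (y : Ordinal.{0}) := by
      intro A y hyc hyA
      set L : Set ↥X := {z | r z y} with hL
      have hLc : @IsClosed _ τ L := hcl y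
      have hyL : y ∉ L := fun h => irrefl_of r y h
      have hy2 : y ∈ @closure _ τ (A \ L) := by
        have hsplit : A ⊆ (A ∩ L) ∪ (A \ L) := by
          intro x hx
          by_cases hxL : x ∈ L
          · exact Or.inl ⟨hx, hxL⟩
          · exact Or.inr ⟨hx, hxL⟩
        have h1 : @closure _ τ A ⊆ @closure _ τ ((A ∩ L) ∪ (A \ L)) := closure_mono hsplit
        rw [closure_union] at h1
        rcases h1 hyc with h | h
        · exact absurd (closure_minimal Set.inter_subset_right hLc h) hyL
        · exact h
      set U : Set ↥X := Subtype.val ⁻¹' (Set.Iio ((y : Ordinal.{0}) + 1)) with hU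
      have hUopen : @IsOpen _ τ U := by
        refine IsOpen.mono ?_ hτ
        exact ⟨Set.Iio ((y : Ordinal.{0}) + 1),
          TopologicalSpace.GenerateOpen.basic _ ⟨(y : Ordinal.{0}) + 1, Or.inr rfl⟩, rfl⟩
      have hyU : y ∈ U := by
        show (y : Ordinal.{0}) ∈ Set.Iio ((y : Ordinal.{0}) + 1)
        rw [Set.mem_Iio, Ordinal.add_one_eq_succ]
        exact Order.lt_succ _
      obtain ⟨x, hxU, hxA, hxL⟩ := mem_closure_iff.1 hy2 U hUopen hyU
      have hxy : x ≠ y := fun h => hyA (h ▸ hxA)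
      have hxlt : (x : Ordinal.{0}) < (y : Ordinal.{0}) := by
        have h1 : (x : Ordinal.{0}) < (y : Ordinal.{0}) + 1 := hxU
        rw [Ordinal.add_one_eq_succ, Order.lt_succ_iff] at h1
        exact lt_of_le_of_ne h1 (fun h => hxy (hval_inj h))
      exact ⟨x, hxA, hxL, hxlt⟩
    -- Main lemma, by well-founded induction on t.
    have main : ∀ t : T, ∀ A : Set ↥X, A ⊆ P t → #↥A = Cardinal.lift.{1} κ →
        ∀ o : Ordinal.{1}, (∀ x ∈ A, Ordinal.typein r x < o) →
        Ordinal.lift.{1} (κ.ord * rk t) ≤ o := by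
      intro t
      induction t using WellFoundedLT.induction with
      | _ t IH =>
      -- The core argument.
      have core : ∀ s : T, s < t → ∀ A : Set ↥X, A ⊆ P t → #↥A = Cardinal.lift.{1} κ →
          (∀ x ∈ A, Ordinal.typein r x < Ordinal.lift.{1} (κ.ord * rk s)) → False := by
        intro s hst A hAP hAcard hAbound
        have hstat := hS7 s t hst A hAP hAcard
        set W : Set ↥X := @closure _ τ A ∩ P s with hWdef
        have hdisjst : ∀ y : ↥X, y ∈ P s → y ∉ A := by
          intro y hyPs hyA
          exact (Set.disjoint_left.1 (hdisj s t (ne_of_lt hst))) hyPs (hAP hyA)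
        have hwit : ∀ v, v ∈ Subtype.val '' W → ∃ p : ↥X × ↥X,
            (p.1 : Ordinal.{0}) = v ∧ p.1 ∈ W ∧ p.2 ∈ A ∧ ¬ r p.2 p.1 ∧
            (p.2 : Ordinal.{0}) < v := by
          rintro v ⟨y, hyW, rfl⟩
          obtain ⟨x, hxA, hxr, hxlt⟩ := hwitness A y hyW.1 (hdisjst y hyW.2)
          exact ⟨(y, x), rfl, hyW, hxA, hxr, hxlt⟩
        set f : Ordinal.{0} → Ordinal.{0} := fun v =>
          if h : v ∈ Subtype.val '' W then ((Classical.choose (hwit v h)).2 : Ordinal.{0})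
          else 0 with hfdef
        have hfreg : ∀ v ∈ Subtype.val '' W, f v < v := by
          intro v hv
          simp only [hfdef, dif_pos hv]
          exact (Classical.choose_spec (hwit v hv)).2.2.2.2
        obtain ⟨ν, hν⟩ := fodor_lemma hreg hunc hstat f hfreg
        have hνne : {α | α ∈ Subtype.val '' W ∧ f α = ν}.Nonempty := by
          obtain ⟨α, hα, _⟩ := hν.2 (Set.Iio κ.ord)
            ⟨subset_rfl, fun β hβ => ⟨β, hβ, le_rfl⟩, fun β hβ _ _ => hβ⟩
          exact ⟨α, hα⟩
        obtain ⟨v₀, hv₀⟩ := hνne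
        set x₀ : ↥X := (Classical.choose (hwit v₀ hv₀.1)).2 with hx₀def
        have hx₀A : x₀ ∈ A := (Classical.choose_spec (hwit v₀ hv₀.1)).2.2.1
        have hx₀val : (x₀ : Ordinal.{0}) = ν := by
          have h1 := hv₀.2
          simp only [hfdef, dif_pos hv₀.1] at h1
          exact h1
        set ρ : Ordinal.{1} := Ordinal.typein r x₀ with hρdef
        set F : Set ↥X := {y | y ∈ W ∧ f (y : Ordinal.{0}) = ν} with hFdef
        have hFval : Subtype.val '' F = {α | α ∈ Subtype.val '' W ∧ f α = ν} := by
          apply Set.Subset.antisymm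
          · rintro _ ⟨y, hyF, rfl⟩
            exact ⟨⟨y, hyF.1, rfl⟩, hyF.2⟩
          · rintro α ⟨⟨y, hyW, rfl⟩, hfα⟩
            exact ⟨y, ⟨hyW, hfα⟩, rfl⟩
        have hFrank : ∀ y ∈ F, Ordinal.typein r y < ρ := by
          intro y hyF
          have hv : (y : Ordinal.{0}) ∈ Subtype.val '' W := ⟨y, hyF.1, rfl⟩
          have hspec := Classical.choose_spec (hwit _ hv)
          have hp1 : (Classical.choose (hwit _ hv)).1 = y := hval_inj hspec.1
          have hp2 : (Classical.choose (hwit _ hv)).2 = x₀ := by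
            apply hval_inj
            have h1 : f (y : Ordinal.{0}) = ν := hyF.2
            simp only [hfdef, dif_pos hv] at h1
            rw [h1, hx₀val]
          have hnr : ¬ r x₀ y := by
            rw [← hp1, ← hp2]
            exact hspec.2.2.2.1
          have hne : x₀ ≠ y := fun h => hdisjst y hyF.1.2 (h ▸ hx₀A)
          rcases trichotomous_of r y x₀ with h | h | h
          · exact (Ordinal.typein_lt_typein r).2 h
          · exact absurd h.symm hne
          · exact absurd h hnr
        have hFcard : #↥F = Cardinal.lift.{1} κ := by
          apply le_antisymm
          · rw [← hXcard]
            exact Cardinal.mk_set_le F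
          · have h1 := stationary_card hreg hν
            rw [← hFval] at h1
            rwa [Cardinal.mk_image_eq hval_inj] at h1
        have hFsub : F ⊆ P s := fun y hy => hy.1.2
        have := IH s hst F hFsub hFcard ρ hFrank
        exact absurd (hAbound x₀ hx₀A) (not_lt.2 this)
      -- now the induction step
      intro A hAP hAcard o hbound
      by_contra hcon
      push_neg at hcon
      rw [Ordinal.lift_mul] at hcon
      set K : Ordinal.{1} := Ordinal.lift.{1} κ.ord with hKdef
      have hK0pos : (0 : Ordinal.{1}) < K := by
        have h1 := Ordinal.lift_lt.{1,0}.2 (pos_iff_ne_zero.2 hκord0)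
        simpa only [Ordinal.lift_zero] using h1
      have hK0 : K ≠ 0 := hK0pos.ne'
      set q : Ordinal.{1} := o / K with hqdef
      have hrem : K * q + o % K = o := Ordinal.div_add_mod o K
      have hqlt : q < Ordinal.lift.{1} (rk t) := (Ordinal.div_lt hK0).2 hcon
      obtain ⟨q₀, hq₀⟩ := Ordinal.mem_range_lift_of_le hqlt.le
      have hq₀lt : q₀ < rk t := by
        rw [← Ordinal.lift_lt.{1}, hq₀]
        exact hqlt
      have hex : ∃ s, s < t ∧ q₀ ≤ rk s := by
        by_contra hno
        push_neg at hno
        have h1 : rk t ≤ q₀ := by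
          show IsWellFounded.rank (α := T) (· < ·) t ≤ q₀
          rw [IsWellFounded.rank_eq]
          apply Ordinal.iSup_le
          rintro ⟨s, hs⟩
          exact Order.succ_le_of_lt (hno s hs)
        exact absurd hq₀lt (not_lt.2 h1)
      obtain ⟨s, hst, hq₀s⟩ := hex
      rcases lt_or_eq_of_le hq₀s with hlt2 | heq2
      · -- q₀ < rk s
        have h1 : o < Ordinal.lift.{1} (κ.ord * rk s) := by
          have h2 : o < K * (q + 1) := by
            rw [Ordinal.add_one_eq_succ, Ordinal.mul_succ, ← hrem]
            exact add_lt_add_right (Ordinal.mod_lt o hK0) _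
          have h3 : K * (q + 1) ≤ Ordinal.lift.{1} (κ.ord * rk s) := by
            rw [Ordinal.lift_mul]
            apply mul_le_mul_right
            rw [← hq₀, Ordinal.add_one_eq_succ, ← Ordinal.lift_succ, Ordinal.lift_le,
              ← Ordinal.add_one_eq_succ]
            exact Order.succ_le_of_lt hlt2
          exact h2.trans_le h3
        exact core s hst A hAP hAcard (fun x hx => (hbound x hx).trans h1)
      · -- q₀ = rk s
        set A₁ : Set ↥X := {x | x ∈ A ∧ Ordinal.typein r x < K * q} with hA₁def
        set A₂ : Set ↥X := {x | x ∈ A ∧ ¬ Ordinal.typein r x < K * q} with hA₂def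
        have hA₂small : #↥A₂ < Cardinal.lift.{1} κ := by
          have hinj : ∀ x : ↥A₂, Ordinal.typein r (x : ↥X) - K * q < o % K := by
            rintro ⟨x, hxA, hxge⟩
            rw [Ordinal.sub_lt_of_le (not_lt.1 hxge), hrem]
            exact hbound x hxA
          set ψ : ↥A₂ → (o % K).ToType := fun x =>
            Ordinal.ToType.mk (o := o % K) ⟨Ordinal.typein r (x : ↥X) - K * q, hinj x⟩ with hψdef
          have hψinj : Function.Injective ψ := by
            intro x y hxy
            simp only [hψdef, EmbeddingLike.apply_eq_iff_eq, Subtype.mk.injEq] at hxy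
            have h1 : K * q ≤ Ordinal.typein r (x : ↥X) := not_lt.1 x.2.2
            have h2 : K * q ≤ Ordinal.typein r (y : ↥X) := not_lt.1 y.2.2
            have h3 : Ordinal.typein r (x : ↥X) = Ordinal.typein r (y : ↥X) := by
              rw [← Ordinal.add_sub_cancel_of_le h1, ← Ordinal.add_sub_cancel_of_le h2, Subtype.mk.inj hxy]
            exact Subtype.ext (Ordinal.typein_injective r h3)
          calc #↥A₂ ≤ #((o % K).ToType) := Cardinal.mk_le_of_injective hψinj
          _ = (o % K).card := Cardinal.mk_toType _
          _ < Cardinal.lift.{1} κ := by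
            rw [← Cardinal.lt_ord, ← Cardinal.lift_ord]
            exact Ordinal.mod_lt o hK0
        have hA₁card : #↥A₁ = Cardinal.lift.{1} κ := by
          apply le_antisymm
          · rw [← hXcard]
            exact Cardinal.mk_set_le A₁
          · by_contra hno
            push_neg at hno
            have hsplit : A = A₁ ∪ A₂ := by
              ext x
              constructor
              · intro hx
                by_cases hc : Ordinal.typein r x < K * q
                · exact Or.inl ⟨hx, hc⟩
                · exact Or.inr ⟨hx, hc⟩
              · rintro (hx | hx) <;> exact hx.1
            have h1 : #↥A ≤ #↥A₁ + #↥A₂ := by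
              rw [hsplit]
              exact Cardinal.mk_union_le A₁ A₂
            have h2 : #↥A₁ + #↥A₂ < Cardinal.lift.{1} κ :=
              Cardinal.add_lt_of_lt (by
                rw [← Cardinal.lift_aleph0.{1,0}]
                exact Cardinal.lift_le.2 hreg.aleph0_le) hno hA₂small
            rw [hAcard] at h1
            exact absurd (h1.trans_lt h2) (lt_irrefl _)
        have hA₁bound : ∀ x ∈ A₁, Ordinal.typein r x < Ordinal.lift.{1} (κ.ord * rk s) := by
          intro x hx
          have h1 : K * q = Ordinal.lift.{1} (κ.ord * rk s) := by
            rw [Ordinal.lift_mul, ← hq₀, heq2]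
          rw [← h1]
          exact hx.2
        exact core s hst A₁ (fun x hx => hAP hx.1) hA₁card hA₁bound
    -- apply `main` to the full pieces
    have hPt : ∀ t : T, Ordinal.lift.{1} (κ.ord * rk t) ≤ @Ordinal.type ↥X r hwo := by
      intro t
      exact main t (P t) subset_rfl (hsize t) _
        (fun x _ => Ordinal.typein_lt_type r x)
    -- conclude using the structure of `pordRank`
    have hTne : Nonempty T := by
      have hXne : Nonempty ↥X := by
        rw [← Cardinal.mk_ne_zero_iff, hXcard]
        simp only [ne_eq, Cardinal.lift_eq_zero]
        exact hreg.pos.ne'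
      obtain ⟨x⟩ := hXne
      have : x ∈ ⋃ t, P t := by rw [hcov]; trivial
      obtain ⟨_, ⟨t, rfl⟩, _⟩ := this
      exact ⟨t⟩
    by_cases hsucc : ∃ γ, pordRank T = Order.succ γ
    · obtain ⟨γ, hγ⟩ := hsucc
      have hpred : (pordRank T).pred = γ := by rw [hγ, Ordinal.pred_succ]
      have hext : ∃ t : T, γ ≤ rk t := by
        by_contra hno
        push_neg at hno
        have h1 : pordRank T ≤ γ := by
          rw [pordRank]
          apply Ordinal.iSup_le
          intro t
          rw [Ordinal.add_one_eq_succ]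
          exact Order.succ_le_of_lt (hno t)
        rw [hγ] at h1
        exact absurd h1 (not_le.2 (Order.lt_succ γ))
      obtain ⟨t, hγt⟩ := hext
      rw [hpred]
      calc Ordinal.lift.{1} (κ.ord * γ) ≤ Ordinal.lift.{1} (κ.ord * rk t) :=
            Ordinal.lift_le.2 (mul_le_mul_right hγt _)
      _ ≤ @Ordinal.type ↥X r hwo := hPt t
    · have hpred : (pordRank T).pred = pordRank T := Ordinal.pred_eq_iff_isSuccPrelimit.2 (fun c hc => hsucc ⟨c, hc.succ_eq.symm⟩)
      rw [hpred]
      have hR0 : pordRank T ≠ 0 := by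
        intro h0
        obtain ⟨t⟩ := hTne
        have h1 : rk t + 1 ≤ pordRank T := Ordinal.le_iSup _ t
        rw [h0] at h1
        simp only [Ordinal.add_one_eq_succ] at h1
        exact (Order.succ_ne_bot (rk t) (le_bot_iff.1 h1))
      have hRlim : Order.IsSuccLimit (pordRank T) := by
        rw [Ordinal.isSuccLimit_iff, Order.isSuccPrelimit_iff_succ_lt]
        refine ⟨hR0, fun c hc => ?_⟩
        rcases lt_or_eq_of_le (Order.succ_le_of_lt hc) with h | h
        · exact h
        · exact absurd ⟨c, h.symm⟩ hsucc
      rw [Ordinal.lift_mul]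
      have hKlim : Order.IsSuccLimit (Ordinal.lift.{1} (pordRank T)) :=
        Ordinal.isSuccLimit_lift.2 hRlim
      have hnorm : Order.IsNormal (fun x => Ordinal.lift.{1} κ.ord * x) :=
        Ordinal.isNormal_mul_right (by
          have h1 := Ordinal.lift_lt.{1,0}.2 (pos_iff_ne_zero.2 hκord0)
          simpa only [Ordinal.lift_zero] using h1)
      rw [hnorm.le_iff_forall_le hKlim]
      intro b hb
      obtain ⟨b₀, hb₀⟩ := Ordinal.mem_range_lift_of_le hb.le
      have hb₀lt : b₀ < pordRank T := by
        rw [← Ordinal.lift_lt.{1}, hb₀]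
        exact hb
      rw [pordRank] at hb₀lt
      rw [Ordinal.lt_iSup_iff] at hb₀lt
      obtain ⟨t, ht⟩ := hb₀lt
      have hble : b₀ ≤ rk t := by
        rw [Ordinal.add_one_eq_succ, Order.lt_succ_iff] at ht
        exact ht
      calc Ordinal.lift.{1} κ.ord * b = Ordinal.lift.{1} (κ.ord * b₀) := by
            rw [Ordinal.lift_mul, hb₀]
      _ ≤ Ordinal.lift.{1} (κ.ord * rk t) := Ordinal.lift_le.2 (mul_le_mul_right hble _)
      _ ≤ @Ordinal.type ↥X r hwo := hPt t
  refine ⟨part1, ?_⟩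
  intro hls
  obtain ⟨o, ho⟩ := hls
  refine le_csInf ⟨o, ho⟩ ?_
  intro b hb
  obtain ⟨r, hwo, hcl, rfl⟩ := hb
  exact part1 r hwo hcl
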